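/- Fix N ≥ 1, n_x, n_u ≥ 1, matrices A ∈ ℝ^{n_x×n_x}, B₀, B₁ ∈ ℝ^{n_x×n_u}, 0 < ρ_min ≤ ρ_max, vectors η₂, …, η_N ∈ ℝ^{n_x}, controls u₁*, …, u_{N+1}* ∈ ℝ^{n_u}, and slacks σ₂*, …, σ_N* ∈ [ρ_min, ρ_max]. Let M = B₀ + A B₁. Suppose that for each interior index i ∈ {2, …, N}, u_i* minimizes the linear function u ↦ ⟨η_i, M u⟩ over the ball {u ∈ ℝ^{n_u} : ‖u‖ ≤ σ_i*}, and suppose the set {i ∈ {2, …, N} : Mᵀη_i = 0} has cardinality at most n_x − 1. Then the set of vertices at which LCvx is violated, {i ∈ {1, …, N+1} : ¬(ρ_min ≤ ‖u_i*‖ ≤ ρ_max)}, has cardinality at most n_x + 1. (Deterministic core of the paper's main vertex theorem: given the Lagrangian-minimization characterization at interior vertices and at most n_x − 1 vanishing reduced costates, LCvx is violated at no more than n_x + 1 vertices, the two extra slots accounting for the endpoints i = 1 and i = N+1.) -/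

import Mathlib

open RealInnerProductSpace Matrix
open scoped Classical

/-- Matrix-vector multiplication viewed as a map between Euclidean spaces
(definitionally `Matrix.mulVec`). -/
def mulVecE {k n : ℕ} (M : Matrix (Fin k) (Fin n) ℝ)
    (v : EuclideanSpace ℝ (Fin n)) : EuclideanSpace ℝ (Fin k) :=
  WithLp.toLp 2 (M.mulVec v)

lemma inner_mulVecE {nx nu : ℕ} (M : Matrix (Fin nx) (Fin nu) ℝ)
    (x : EuclideanSpace ℝ (Fin nx)) (u : EuclideanSpace ℝ (Fin nu)) :
    ⟪x, mulVecE M u⟫ = ⟪mulVecE Mᵀ x, u⟫ := by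
  simp only [mulVecE, PiLp.inner_apply, RCLike.inner_apply, conj_trivial,
    Matrix.mulVec, dotProduct, PiLp.toLp_apply, Matrix.transpose_apply, Finset.mul_sum, Finset.sum_mul]
  rw [Finset.sum_comm]
  apply Finset.sum_congr rfl; intro j _; apply Finset.sum_congr rfl; intro k _; ring

/-- Deterministic core of the main vertex theorem: if at each interior vertex
`i ∈ {2, …, N}` the control `uᵢ*` minimizes `u ↦ ⟨ηᵢ, (B₀ + A B₁) u⟩` over the
ball of radius `σᵢ* ∈ [ρ_min, ρ_max]`, and `(B₀ + A B₁)ᵀηᵢ = 0` holds for at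
most `n_x − 1` interior vertices, then LCvx is violated at no more than
`n_x + 1` of the vertices `1, …, N+1`. -/
theorem stmt_14 (N nx nu : ℕ) (hN : 1 ≤ N) (hnx : 1 ≤ nx) (hnu : 1 ≤ nu)
    (A : Matrix (Fin nx) (Fin nx) ℝ) (B0 B1 : Matrix (Fin nx) (Fin nu) ℝ)
    (ρmin ρmax : ℝ) (hρ0 : 0 < ρmin) (hρ : ρmin ≤ ρmax)
    (η : ℕ → EuclideanSpace ℝ (Fin nx))
    (ustar : ℕ → EuclideanSpace ℝ (Fin nu))
    (σstar : ℕ → ℝ)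
    (hσ : ∀ i ∈ Finset.Icc 2 N, ρmin ≤ σstar i ∧ σstar i ≤ ρmax)
    (M : Matrix (Fin nx) (Fin nu) ℝ) (hM : M = B0 + A * B1)
    (hmin : ∀ i ∈ Finset.Icc 2 N, ‖ustar i‖ ≤ σstar i ∧
      ∀ w : EuclideanSpace ℝ (Fin nu), ‖w‖ ≤ σstar i →
        ⟪η i, mulVecE M (ustar i)⟫ ≤ ⟪η i, mulVecE M w⟫)
    (hzero : ((Finset.Icc 2 N).filter (fun i => mulVecE Mᵀ (η i) = 0)).card ≤ nx - 1) :
    ((Finset.Icc 1 (N + 1)).filter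
      (fun i => ¬(ρmin ≤ ‖ustar i‖ ∧ ‖ustar i‖ ≤ ρmax))).card ≤ nx + 1 := by
  have key : ∀ i ∈ Finset.Icc 2 N, mulVecE Mᵀ (η i) ≠ 0 →
      ρmin ≤ ‖ustar i‖ ∧ ‖ustar i‖ ≤ ρmax := by
    intro i hi hv
    obtain ⟨hσ1, hσ2⟩ := hσ i hi
    obtain ⟨hle, hopt⟩ := hmin i hi
    set v := mulVecE Mᵀ (η i) with hvdef
    have hσpos : 0 < σstar i := lt_of_lt_of_le hρ0 hσ1
    have hvnorm : 0 < ‖v‖ := norm_pos_iff.mpr hv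
    set w : EuclideanSpace ℝ (Fin nu) := (-(σstar i) / ‖v‖) • v with hwdef
    have hwnorm : ‖w‖ = σstar i := by
      rw [hwdef, norm_smul, Real.norm_eq_abs, abs_div, abs_neg, abs_of_pos hσpos,
        abs_of_pos hvnorm, div_mul_cancel₀ _ hvnorm.ne']
    have h1 : ⟪v, w⟫ = -(σstar i) * ‖v‖ := by
      rw [hwdef, real_inner_smul_right, real_inner_self_eq_norm_sq]
      field_simp
    have h2 := hopt w (le_of_eq hwnorm)
    rw [inner_mulVecE, inner_mulVecE, ← hvdef, h1] at h2
    have h3 : -(‖v‖ * ‖ustar i‖) ≤ ⟪v, ustar i⟫ :=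
      neg_le_of_abs_le (abs_real_inner_le_norm v (ustar i))
    have hge : σstar i ≤ ‖ustar i‖ := by
      nlinarith [hvnorm]
    exact ⟨le_trans hσ1 hge, le_trans hle hσ2⟩
  have hsub : (Finset.Icc 1 (N + 1)).filter
        (fun i => ¬(ρmin ≤ ‖ustar i‖ ∧ ‖ustar i‖ ≤ ρmax))
      ⊆ insert 1 (insert (N + 1)
        ((Finset.Icc 2 N).filter (fun i => mulVecE Mᵀ (η i) = 0))) := by
    intro i hi
    simp only [Finset.mem_filter, Finset.mem_Icc] at hi
    simp only [Finset.mem_insert, Finset.mem_filter, Finset.mem_Icc]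
    by_contra h
    push_neg at h
    obtain ⟨h1, h2, h3⟩ := h
    have hi2 : 2 ≤ i := by omega
    have hiN : i ≤ N := by omega
    exact hi.2 (key i (Finset.mem_Icc.mpr ⟨hi2, hiN⟩) (h3 ⟨hi2, hiN⟩))
  calc ((Finset.Icc 1 (N + 1)).filter
        (fun i => ¬(ρmin ≤ ‖ustar i‖ ∧ ‖ustar i‖ ≤ ρmax))).card
      ≤ (insert 1 (insert (N + 1)
        ((Finset.Icc 2 N).filter (fun i => mulVecE Mᵀ (η i) = 0)))).card :=
        Finset.card_le_card hsub
    _ ≤ (insert (N + 1)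
        ((Finset.Icc 2 N).filter (fun i => mulVecE Mᵀ (η i) = 0))).card + 1 :=
        Finset.card_insert_le _ _
    _ ≤ ((Finset.Icc 2 N).filter (fun i => mulVecE Mᵀ (η i) = 0)).card + 1 + 1 := by
        have := Finset.card_insert_le (N + 1)
          ((Finset.Icc 2 N).filter (fun i => mulVecE Mᵀ (η i) = 0))
        omega
    _ ≤ nx + 1 := by omega
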